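/- arXiv:2602.19049 — 3 statements merged into one kernel-verified Lean document; each statement's English description precedes it below -/
import Mathlib

section
/- With the exponential tilting $\pi_\eta(v) \propto \pi(v)\exp(\eta \pi(v))$ (advantage equal to the probability itself), if $\pi$ is not the uniform distribution on its (full) support, then there exists $\eta_0 > 0$ such that for all $0 < \eta < \eta_0$, the entropy satisfies $H(\pi_\eta) < H(\pi)$. -/
open Finset

/-- Under exponential tilting with advantage `A(v) = π(v)` itself, a non-uniform
positive pmf has strictly decreased entropy for all sufficiently small `η > 0`. -/
theorem entropy_decreases_tilt_by_prob {V : Type*} [Fintype V]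
    (hcard : 2 ≤ Fintype.card V)
    (π : V → ℝ) (hpos : ∀ v, 0 < π v) (hsum : ∑ v, π v = 1)
    (hnc : ∃ v w : V, π v ≠ π w) :
    ∃ η₀ > 0, ∀ η : ℝ, 0 < η → η < η₀ →
      (-∑ v, (π v * Real.exp (η * π v) / ∑ w, π w * Real.exp (η * π w))
            * Real.log (π v * Real.exp (η * π v) / ∑ w, π w * Real.exp (η * π w)))
        < -∑ v, π v * Real.log (π v) := by
  set m : ℝ := ∑ v, π v * π v with hm
  set f : ℝ → ℝ := fun η => -∑ v, (π v * Real.exp (η * π v) / ∑ w, π w * Real.exp (η * π w))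
            * Real.log (π v * Real.exp (η * π v) / ∑ w, π w * Real.exp (η * π w)) with hf
  have hZ0 : (∑ w, π w * Real.exp (0 * π w)) = 1 := by simp [hsum]
  have hf0 : f 0 = -∑ v, π v * Real.log (π v) := by
    simp [hf, hsum]
  -- derivative of Z at 0
  have hN : ∀ v, HasDerivAt (fun η : ℝ => π v * Real.exp (η * π v)) (π v * π v) 0 := by
    intro v
    have h1 : HasDerivAt (fun η : ℝ => η * π v) (π v) 0 := hasDerivAt_mul_const _
    have h3 := (h1.exp).const_mul (π v)
    refine h3.congr_deriv ?_
    simp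
  have hZ' : HasDerivAt (fun η : ℝ => ∑ w, π w * Real.exp (η * π w)) m 0 := by
    rw [hm]
    exact HasDerivAt.fun_sum (fun w _ => hN w)
  have hp : ∀ v, HasDerivAt
      (fun η : ℝ => π v * Real.exp (η * π v) / ∑ w, π w * Real.exp (η * π w))
      (π v * π v - π v * m) 0 := by
    intro v
    have := (hN v).fun_div hZ' (by rw [hZ0]; norm_num)
    refine this.congr_deriv ?_
    rw [hZ0]
    simp
  have hp0 : ∀ v, π v * Real.exp (0 * π v) / (∑ w, π w * Real.exp (0 * π w)) = π v := by
    intro v; rw [hZ0]; simp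
  have hterm : ∀ v, HasDerivAt
      (fun η : ℝ => (π v * Real.exp (η * π v) / ∑ w, π w * Real.exp (η * π w))
            * Real.log (π v * Real.exp (η * π v) / ∑ w, π w * Real.exp (η * π w)))
      ((Real.log (π v) + 1) * (π v * π v - π v * m)) 0 := by
    intro v
    have hφ := Real.hasDerivAt_mul_log
      (x := π v * Real.exp (0 * π v) / ∑ w, π w * Real.exp (0 * π w))
      (by rw [hp0 v]; exact (hpos v).ne')
    have := hφ.comp 0 (hp v)
    rw [hp0 v] at this
    exact this
  have hD : HasDerivAt f (-∑ v, (Real.log (π v) + 1) * (π v * π v - π v * m)) 0 := by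
    rw [hf]
    exact (HasDerivAt.fun_sum (fun v _ => hterm v)).neg
  -- the derivative is negative
  have hS : 0 < ∑ v, (Real.log (π v) + 1) * (π v * π v - π v * m) := by
    have hA : ∑ v, (Real.log (π v) + 1) * (π v * π v - π v * m)
        = (∑ v, π v * π v * Real.log (π v)) - m * ∑ v, π v * Real.log (π v) := by
      have : ∀ v, (Real.log (π v) + 1) * (π v * π v - π v * m)
          = π v * π v * Real.log (π v) - m * (π v * Real.log (π v)) + (π v * π v - m * π v) := by
        intro v; ring
      rw [Finset.sum_congr rfl (fun v _ => this v), Finset.sum_add_distrib,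
        Finset.sum_sub_distrib, Finset.sum_sub_distrib, ← Finset.mul_sum, ← Finset.mul_sum,
        ← hm, hsum]
      ring
    have hT : ∑ v, ∑ w, π v * π w * ((π v - π w) * (Real.log (π v) - Real.log (π w)))
        = 2 * ((∑ v, π v * π v * Real.log (π v)) - m * ∑ v, π v * Real.log (π v)) := by
      have h1 : ∀ v w : V, π v * π w * ((π v - π w) * (Real.log (π v) - Real.log (π w)))
          = (π v * π v * Real.log (π v)) * π w + π v * (π w * π w * Real.log (π w))
            - (π v * π v) * (π w * Real.log (π w)) - (π v * Real.log (π v)) * (π w * π w) := by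
        intro v w; ring
      simp_rw [h1, Finset.sum_sub_distrib, Finset.sum_add_distrib, ← Finset.mul_sum,
        ← Finset.sum_mul, hsum, ← hm]
      ring
    have hnonneg : ∀ v w : V,
        0 ≤ π v * π w * ((π v - π w) * (Real.log (π v) - Real.log (π w))) := by
      intro v w
      apply mul_nonneg (mul_nonneg (hpos v).le (hpos w).le)
      rcases le_total (π v) (π w) with h | h
      · exact mul_nonneg_iff.mpr (Or.inr ⟨by linarith,
          by have := Real.log_le_log (hpos v) h; linarith⟩)
      · exact mul_nonneg (by linarith) (by have := Real.log_le_log (hpos w) h; linarith)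
    obtain ⟨v₀, w₀, hvw⟩ := hnc
    have hTpos : 0 < ∑ v, ∑ w, π v * π w * ((π v - π w) * (Real.log (π v) - Real.log (π w))) := by
      apply Finset.sum_pos'
      · intro v _
        exact Finset.sum_nonneg (fun w _ => hnonneg v w)
      · refine ⟨v₀, Finset.mem_univ _, Finset.sum_pos' (fun w _ => hnonneg v₀ w)
          ⟨w₀, Finset.mem_univ _, ?_⟩⟩
        apply mul_pos (mul_pos (hpos v₀) (hpos w₀))
        rcases lt_or_gt_of_ne hvw with h | h
        · have hl := Real.log_lt_log (hpos v₀) h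
          exact mul_pos_of_neg_of_neg (by linarith) (by linarith)
        · have hl := Real.log_lt_log (hpos w₀) h
          exact mul_pos (by linarith) (by linarith)
    rw [hT] at hTpos
    linarith [hA ▸ hTpos]
  have hDneg : (-∑ v, (Real.log (π v) + 1) * (π v * π v - π v * m)) < 0 := by linarith
  -- conclude via slope
  rw [hasDerivAt_iff_tendsto_slope] at hD
  have hev : ∀ᶠ η in nhdsWithin (0:ℝ) (Set.Ioi 0), slope f 0 η < 0 := by
    have h1 : ∀ᶠ η in nhdsWithin (0:ℝ) {(0:ℝ)}ᶜ, slope f 0 η < 0 :=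
      hD.eventually_lt_const hDneg
    exact h1.filter_mono (nhdsWithin_mono 0 (fun x hx => ne_of_gt hx))
  rw [Filter.eventually_iff, mem_nhdsGT_iff_exists_Ioo_subset] at hev
  obtain ⟨η₀, hη₀, hsub⟩ := hev
  refine ⟨η₀, hη₀, fun η hη1 hη2 => ?_⟩
  have hs := hsub ⟨hη1, hη2⟩
  rw [Set.mem_setOf_eq, slope_def_field] at hs
  have : f η - f 0 < 0 := by
    have hη : (0:ℝ) < η - 0 := by linarith
    nlinarith [div_lt_iff₀ hη |>.mp hs]
  have goal : f η < f 0 := by linarith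
  rw [hf0] at goal
  exact goal
end

section
/- With the exponential tilting $\pi_\eta(v) \propto \pi(v)\exp(-\eta \pi(v))$ (negated probability as advantage), if $\pi$ is not the uniform distribution on its full support, then there exists $\eta_0 > 0$ such that for all $0 < \eta < \eta_0$, the entropy satisfies $H(\pi_\eta) > H(\pi)$. -/
open Finset

private lemma cov_pos_aux {V : Type*} [Fintype V]
    (π : V → ℝ) (hpos : ∀ v, 0 < π v) (hsum : ∑ v, π v = 1)
    (hnc : ∃ v w : V, π v ≠ π w) :
    (∑ v, (π v) ^ 2) * (∑ v, π v * Real.log (π v)) < ∑ v, (π v) ^ 2 * Real.log (π v) := by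
  have key : ∑ v, ∑ w, (π v * π w * ((π v - π w) * (Real.log (π v) - Real.log (π w))))
      = 2 * ((∑ v, (π v) ^ 2 * Real.log (π v))
          - (∑ v, (π v) ^ 2) * (∑ v, π v * Real.log (π v))) := by
    have hpt : ∀ v w : V, π v * π w * ((π v - π w) * (Real.log (π v) - Real.log (π w)))
        = ((π v) ^ 2 * Real.log (π v)) * π w - (π v) ^ 2 * (π w * Real.log (π w))
          - (π v * Real.log (π v)) * (π w) ^ 2 + π v * ((π w) ^ 2 * Real.log (π w)) := by
      intro v w; ring
    simp_rw [hpt]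
    simp_rw [Finset.sum_add_distrib, Finset.sum_sub_distrib]
    simp_rw [← Finset.mul_sum, ← Finset.sum_mul]
    simp_rw [hsum]
    ring
  have hmono : ∀ v w : V, 0 ≤ (π v - π w) * (Real.log (π v) - Real.log (π w)) := by
    intro v w
    rcases lt_trichotomy (π v) (π w) with h | h | h
    · have := Real.log_lt_log (hpos v) h
      nlinarith
    · simp [h]
    · exact mul_nonneg (by linarith) (by have := Real.log_lt_log (hpos w) h; linarith)
  have hnn : ∀ v w : V, 0 ≤ π v * π w * ((π v - π w) * (Real.log (π v) - Real.log (π w))) :=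
    fun v w => mul_nonneg (mul_nonneg (hpos v).le (hpos w).le) (hmono v w)
  obtain ⟨a, b, hab⟩ := hnc
  have hstrict : 0 < π a * π b * ((π a - π b) * (Real.log (π a) - Real.log (π b))) := by
    have h2 : 0 < (π a - π b) * (Real.log (π a) - Real.log (π b)) := by
      rcases lt_or_gt_of_ne hab with h | h
      · have := Real.log_lt_log (hpos a) h
        exact mul_pos_of_neg_of_neg (by linarith) (by linarith)
      · have := Real.log_lt_log (hpos b) h
        exact mul_pos (by linarith) (by linarith)
    exact mul_pos (mul_pos (hpos a) (hpos b)) h2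
  have hpossum : 0 < ∑ v, ∑ w, (π v * π w * ((π v - π w) * (Real.log (π v) - Real.log (π w)))) := by
    refine Finset.sum_pos' (fun v _ => Finset.sum_nonneg fun w _ => hnn v w) ⟨a, mem_univ a, ?_⟩
    exact Finset.sum_pos' (fun w _ => hnn a w) ⟨b, mem_univ b, hstrict⟩
  nlinarith [key, hpossum]

/-- Under exponential tilting with advantage `A(v) = -π(v)`, a non-uniform
positive pmf has strictly increased entropy for all sufficiently small `η > 0`. -/
theorem entropy_increases_tilt_by_neg_prob {V : Type*} [Fintype V]
    (hcard : 2 ≤ Fintype.card V)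
    (π : V → ℝ) (hpos : ∀ v, 0 < π v) (hsum : ∑ v, π v = 1)
    (hnc : ∃ v w : V, π v ≠ π w) :
    ∃ η₀ > 0, ∀ η : ℝ, 0 < η → η < η₀ →
      (-∑ v, π v * Real.log (π v))
        < -∑ v, (π v * Real.exp (-η * π v) / ∑ w, π w * Real.exp (-η * π w))
              * Real.log (π v * Real.exp (-η * π v) / ∑ w, π w * Real.exp (-η * π w)) := by
  classical
  set S : ℝ := ∑ v, (π v) ^ 2 with hS
  set Z : ℝ → ℝ := fun η => ∑ w, π w * Real.exp (-η * π w) with hZ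
  have hZ0 : Z 0 = 1 := by simp [hZ, hsum]
  have hZd : HasDerivAt Z (-S) 0 := by
    have : HasDerivAt Z (∑ w, -((π w) ^ 2)) 0 := by
      apply HasDerivAt.fun_sum
      intro w _
      have h1 : HasDerivAt (fun η : ℝ => -η * π w) (-π w) 0 := by
        simpa using ((hasDerivAt_id (0 : ℝ)).neg.mul_const (π w))
      have h2 := h1.exp
      have h3 := h2.const_mul (π w)
      convert! h3 using 1
      simp; ring
    simpa [hS, Finset.sum_neg_distrib] using this
  set g : V → ℝ → ℝ := fun v η => π v * Real.exp (-η * π v) / Z η with hg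
  have hg0 : ∀ v, g v 0 = π v := by intro v; simp [hg, hZ0]
  have hgd : ∀ v, HasDerivAt (g v) (π v * S - (π v) ^ 2) 0 := by
    intro v
    have h1 : HasDerivAt (fun η : ℝ => -η * π v) (-π v) 0 := by
      simpa using ((hasDerivAt_id (0 : ℝ)).neg.mul_const (π v))
    have hN : HasDerivAt (fun η : ℝ => π v * Real.exp (-η * π v)) (-(π v) ^ 2) 0 := by
      have := h1.exp.const_mul (π v)
      convert! this using 1
      simp; ring
    have := hN.fun_div hZd (by rw [hZ0]; exact one_ne_zero)
    convert! this using 1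
    rw [hZ0]
    simp
    ring
  have hterm : ∀ v, HasDerivAt (fun η => g v η * Real.log (g v η))
      ((π v * S - (π v) ^ 2) * (Real.log (π v) + 1)) 0 := by
    intro v
    have hne : g v 0 ≠ 0 := by rw [hg0 v]; exact (hpos v).ne'
    have hlog := (hgd v).log hne
    have := (hgd v).mul hlog
    have h0 : π v ≠ 0 := (hpos v).ne'
    convert! this using 1
    rw [hg0 v]
    field_simp
  set c : ℝ := -∑ v, (π v * S - (π v) ^ 2) * (Real.log (π v) + 1) with hc
  set F : ℝ → ℝ := fun η => -∑ v, g v η * Real.log (g v η) with hF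
  have hFd : HasDerivAt F c 0 := (HasDerivAt.fun_sum (fun v _ => hterm v)).neg
  have hcval : c = (∑ v, (π v) ^ 2 * Real.log (π v)) - S * (∑ v, π v * Real.log (π v)) := by
    have hpt : ∀ v : V, (π v * S - (π v) ^ 2) * (Real.log (π v) + 1)
        = S * (π v * Real.log (π v)) + S * π v - (π v) ^ 2 * Real.log (π v) - (π v) ^ 2 := by
      intro v; ring
    rw [hc]
    simp_rw [hpt, Finset.sum_sub_distrib, Finset.sum_add_distrib, ← Finset.mul_sum, hsum, hS]
    ring
  have hcpos : 0 < c := by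
    rw [hcval, hS]
    have := cov_pos_aux π hpos hsum hnc
    linarith
  have hF0 : F 0 = -∑ v, π v * Real.log (π v) := by
    rw [hF]
    simp only [hg0]
  -- slope argument
  have hslope := hasDerivAt_iff_tendsto_slope.mp hFd
  have hslope' : Filter.Tendsto (slope F 0) (nhdsWithin 0 (Set.Ioi 0)) (nhds c) :=
    hslope.mono_left (nhdsWithin_mono _ (fun x hx => Set.mem_compl_singleton_iff.mpr (ne_of_gt hx)))
  have hev : ∀ᶠ η in nhdsWithin 0 (Set.Ioi 0), 0 < slope F 0 η :=
    hslope'.eventually (eventually_gt_nhds hcpos)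
  rw [Filter.eventually_iff, mem_nhdsGT_iff_exists_Ioo_subset] at hev
  obtain ⟨η₀, hη₀, hsub⟩ := hev
  refine ⟨η₀, hη₀, fun η hη1 hη2 => ?_⟩
  have hmem := hsub ⟨hη1, hη2⟩
  have : 0 < (F η - F 0) / (η - 0) := by
    simpa [slope_def_field] using hmem
  have hlt : F 0 < F η := by
    rw [sub_zero] at this
    have := mul_pos this hη1
    rw [div_mul_cancel₀] at this
    · linarith
    · exact hη1.ne'
  rw [hF0] at hlt
  simpa [hF, hg, hZ] using hlt
end

section
/- For a positive probability mass function $\pi$ on finite $V$ and advantage $A(v) = \pi(v)$, the first-order entropy change under exponential tilting is $\frac{d}{d\eta}H(\pi_\eta)\big|_{\eta=0} = -\mathrm{Cov}_\pi(\log \pi(v), \pi(v))$, and this quantity is strictly negative whenever $\pi$ is non-uniform. -/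
open Finset

lemma tilt_aux_nonneg (a b : ℝ) (ha : 0 < a) (hb : 0 < b) :
    0 ≤ (a - b) * (Real.log a - Real.log b) := by
  rcases le_total b a with h | h
  · have hl := Real.log_le_log hb h
    nlinarith
  · have hl := Real.log_le_log ha h
    nlinarith

lemma tilt_aux_pos (a b : ℝ) (ha : 0 < a) (hb : 0 < b) (hne : a ≠ b) :
    0 < (a - b) * (Real.log a - Real.log b) := by
  rcases lt_or_gt_of_ne hne with h | h
  · have := Real.log_lt_log ha h
    exact mul_pos_of_neg_of_neg (by linarith) (by linarith)
  · have := Real.log_lt_log hb h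
    exact mul_pos (by linarith) (by linarith)

/-- With advantage `A(v) = π(v)`, the first-order entropy change under
exponential tilting is `-Cov_π(log π, π)`, and this is strictly negative
whenever `π` is non-uniform. -/
theorem entropy_deriv_tilt_by_prob {V : Type*} [Fintype V]
    (hcard : 2 ≤ Fintype.card V)
    (π : V → ℝ) (hpos : ∀ v, 0 < π v) (hsum : ∑ v, π v = 1)
    (hnc : ∃ v w : V, π v ≠ π w) :
    HasDerivAt
      (fun η : ℝ =>
        -∑ v, (π v * Real.exp (η * π v) / ∑ w, π w * Real.exp (η * π w))
              * Real.log (π v * Real.exp (η * π v) / ∑ w, π w * Real.exp (η * π w)))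
      (-((∑ v, π v * (Real.log (π v) * π v))
          - (∑ v, π v * π v) * (∑ v, π v * Real.log (π v)))) 0
    ∧ -((∑ v, π v * (Real.log (π v) * π v))
        - (∑ v, π v * π v) * (∑ v, π v * Real.log (π v))) < 0 := by
  set S : ℝ := ∑ v, π v * π v with hS
  set A : ℝ := ∑ v, π v * (Real.log (π v) * π v) with hA
  set B : ℝ := ∑ v, π v * Real.log (π v) with hB
  have hZ0 : (∑ w, π w * Real.exp ((0:ℝ) * π w)) = 1 := by
    simp [hsum]
  have hZne : (∑ w, π w * Real.exp ((0:ℝ) * π w)) ≠ 0 := by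
    rw [hZ0]; exact one_ne_zero
  have hNd : ∀ v : V, HasDerivAt (fun η : ℝ => π v * Real.exp (η * π v))
      (π v * π v) 0 := by
    intro v
    have h1 : HasDerivAt (fun η : ℝ => η * π v) (π v) 0 := by
      simpa using (hasDerivAt_id (0:ℝ)).mul_const (π v)
    simpa using h1.exp.const_mul (π v)
  have hZd : HasDerivAt (fun η : ℝ => ∑ w, π w * Real.exp (η * π w)) S 0 := by
    simpa using HasDerivAt.fun_sum (fun w (_ : w ∈ Finset.univ) => hNd w)
  have hfd : ∀ v : V, HasDerivAt
      (fun η : ℝ => π v * Real.exp (η * π v) / ∑ w, π w * Real.exp (η * π w))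
      (π v * π v - π v * S) 0 := by
    intro v
    have := (hNd v).fun_div hZd hZne
    refine this.congr_deriv ?_
    simp only [zero_mul, Real.exp_zero, mul_one]
    rw [hsum]
    ring
  have hf0 : ∀ v : V,
      π v * Real.exp ((0:ℝ) * π v) / (∑ w, π w * Real.exp ((0:ℝ) * π w)) = π v := by
    intro v; simp [hsum]
  have hterm : ∀ v : V, HasDerivAt
      (fun η : ℝ => (π v * Real.exp (η * π v) / ∑ w, π w * Real.exp (η * π w))
        * Real.log (π v * Real.exp (η * π v) / ∑ w, π w * Real.exp (η * π w)))
      ((π v * π v - π v * S) * Real.log (π v) + (π v * π v - π v * S)) 0 := by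
    intro v
    have hne : π v * Real.exp ((0:ℝ) * π v) / (∑ w, π w * Real.exp ((0:ℝ) * π w)) ≠ 0 := by
      rw [hf0 v]; exact (hpos v).ne'
    have hlog := (hfd v).log hne
    have := (hfd v).fun_mul hlog
    refine this.congr_deriv ?_
    rw [hf0 v]
    have hπ : π v ≠ 0 := (hpos v).ne'
    field_simp
  have hderiv := (HasDerivAt.fun_sum (fun v (_ : v ∈ Finset.univ) => hterm v)).fun_neg
  have hsum_eq : (∑ v, ((π v * π v - π v * S) * Real.log (π v) + (π v * π v - π v * S)))
      = A - S * B := by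
    have h1 : ∀ v : V, (π v * π v - π v * S) * Real.log (π v) + (π v * π v - π v * S)
        = π v * (Real.log (π v) * π v) - S * (π v * Real.log (π v))
          + (π v * π v - S * π v) := by
      intro v; ring
    rw [Finset.sum_congr rfl (fun v _ => h1 v)]
    rw [Finset.sum_add_distrib, Finset.sum_sub_distrib, Finset.sum_sub_distrib,
      ← Finset.mul_sum, ← Finset.mul_sum]
    rw [← hA, ← hB, ← hS, hsum]
    ring
  constructor
  · refine hderiv.congr_deriv ?_
    rw [hsum_eq]
  · -- strict negativity
    have key : A - S * B
        = (1/2) * ∑ v, ∑ w, π v * π w * ((π v - π w) * (Real.log (π v) - Real.log (π w))) := by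
      have h1 : ∀ v : V, ∑ w, π v * π w * ((π v - π w) * (Real.log (π v) - Real.log (π w)))
          = π v * (Real.log (π v) * π v) * (∑ w, π w)
            - (π v * π v) * (∑ w, π w * Real.log (π w))
            - (π v * Real.log (π v)) * (∑ w, π w * π w)
            + π v * (∑ w, π w * (Real.log (π w) * π w)) := by
        intro v
        rw [Finset.mul_sum, Finset.mul_sum, Finset.mul_sum, Finset.mul_sum]
        rw [← Finset.sum_sub_distrib, ← Finset.sum_sub_distrib, ← Finset.sum_add_distrib]
        exact Finset.sum_congr rfl (fun w _ => by ring)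
      rw [Finset.sum_congr rfl (fun v _ => h1 v)]
      simp only [hsum, ← hS, ← hB, ← hA, mul_one]
      rw [Finset.sum_add_distrib, Finset.sum_sub_distrib, Finset.sum_sub_distrib,
        ← Finset.sum_mul, ← Finset.sum_mul, ← Finset.sum_mul]
      rw [← hA, hsum]
      ring
    have hpos2 : 0 < A - S * B := by
      rw [key]
      obtain ⟨v₀, w₀, hvw⟩ := hnc
      have houter : 0 < ∑ v, ∑ w, π v * π w * ((π v - π w) * (Real.log (π v) - Real.log (π w))) := by
        apply Finset.sum_pos'
        · intro v _
          apply Finset.sum_nonneg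
          intro w _
          exact mul_nonneg (mul_nonneg (hpos v).le (hpos w).le)
            (tilt_aux_nonneg _ _ (hpos v) (hpos w))
        · refine ⟨v₀, Finset.mem_univ _, ?_⟩
          apply Finset.sum_pos'
          · intro w _
            exact mul_nonneg (mul_nonneg (hpos v₀).le (hpos w).le)
              (tilt_aux_nonneg _ _ (hpos v₀) (hpos w))
          · refine ⟨w₀, Finset.mem_univ _, ?_⟩
            exact mul_pos (mul_pos (hpos v₀) (hpos w₀))
              (tilt_aux_pos _ _ (hpos v₀) (hpos w₀) hvw)
      linarith
    linarith
end
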